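/- (Closed form of H_{γθ} S H_{γθ}^⊤.) With S defined as the approximate inverse of V ∈ L_n(m,M) and H_{γθ} the cross Hessian of the log-likelihood, H_{γθ} S H_{γθ}^⊤ = ∑_{i=1}^n v_{ii}^{−1} (∑_{j≠i} w_{ij} Z_{ij})(∑_{j≠i} w_{ij} Z_{ij})^⊤ + ∑_{j=1}^n v_{n+j,n+j}^{−1} (∑_{i≠j} w_{ij} Z_{ij})(∑_{i≠j} w_{ij} Z_{ij})^⊤, where w_{ij} = p_{ij}(1−p_{ij}). -/
import Mathlib


open Finset

variable (n p : ℕ)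

/-- Row sum `v_{ii} = ∑_{j ≠ i} w_{ij}`. -/
def rowSum (w : Fin (n+1) → Fin (n+1) → ℝ) (i : Fin (n+1)) : ℝ :=
  ∑ j ∈ univ.erase i, w i j

/-- Column sum `v_{n+j,n+j} = ∑_{i ≠ j} w_{ij}`. -/
def colSum (w : Fin (n+1) → Fin (n+1) → ℝ) (j : Fin (n+1)) : ℝ :=
  ∑ i ∈ univ.erase j, w i j

/-- The cross Hessian `H_{γθ}` of the log-likelihood: its `(k, i)` entry for
`i` in the α-block is `-∑_{j≠i} w_{ij} Z_{ij,k}` and for `j` in the β-block is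
`-∑_{i≠j} w_{ij} Z_{ij,k}`. -/
def crossHessian (w : Fin (n+1) → Fin (n+1) → ℝ)
    (Z : Fin (n+1) → Fin (n+1) → Fin p → ℝ) :
    Matrix (Fin p) (Fin (n+1) ⊕ Fin n) ℝ :=
  Matrix.of fun k x =>
    match x with
    | .inl i => -∑ j ∈ univ.erase i, w i j * Z i j k
    | .inr j => -∑ i ∈ univ.erase j.castSucc, w i j.castSucc * Z i j.castSucc k

/-- The approximate inverse `S` of the Fisher information matrix built from the
weights `w`: `s_{xy} = δ_{xy}/v_{xx} + 1/v_{2n,2n}` on the diagonal blocks and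
`-1/v_{2n,2n}` on the off blocks, where `v_{2n,2n} = ∑_{i≠n} w_{in}`. -/
noncomputable def SapproxW (w : Fin (n+1) → Fin (n+1) → ℝ) :
    Matrix (Fin (n+1) ⊕ Fin n) (Fin (n+1) ⊕ Fin n) ℝ :=
  let v22 : ℝ := colSum n w (Fin.last n)
  Matrix.of fun x y =>
    match x, y with
    | .inl i, .inl i' => (if i = i' then (rowSum n w i)⁻¹ else 0) + v22⁻¹
    | .inl _, .inr _ => -v22⁻¹
    | .inr _, .inl _ => -v22⁻¹
    | .inr j, .inr j' =>
        (if j = j' then (colSum n w j.castSucc)⁻¹ else 0) + v22⁻¹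


private lemma swap_erase_sum (n : ℕ) (f : Fin (n+1) → Fin (n+1) → ℝ) :
    ∑ i, ∑ j ∈ univ.erase i, f i j = ∑ j, ∑ i ∈ univ.erase j, f i j := by
  simp only [Finset.sum_erase_eq_sub (Finset.mem_univ _), Finset.sum_sub_distrib]
  rw [Finset.sum_comm]

private 
lemma key (n : ℕ) (a a' b b' : Fin (n+1) → ℝ) (v u : Fin (n+1) → ℝ)
    (ht : ∑ i, a i = ∑ j, b j) (ht' : ∑ i, a' i = ∑ j, b' j) :
    ∑ x, (∑ x1, (-a x1) * ((if x1 = x then (v x1)⁻¹ else 0) + (u (Fin.last n))⁻¹)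
          + ∑ y : Fin n, (-b y.castSucc) * -(u (Fin.last n))⁻¹) * (-a' x)
      + ∑ x : Fin n, (∑ x1, (-a x1) * -(u (Fin.last n))⁻¹
          + ∑ y : Fin n, (-b y.castSucc) * ((if y = x then (u y.castSucc)⁻¹ else 0) + (u (Fin.last n))⁻¹)) * (-b' x.castSucc)
      = ∑ i, (v i)⁻¹ * a i * a' i + ∑ j, (u j)⁻¹ * b j * b' j := by
  set c := (u (Fin.last n))⁻¹ with hc
  have e1 : ∀ x, ∑ x1, (-a x1) * ((if x1 = x then (v x1)⁻¹ else 0) + c)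
      = -((v x)⁻¹ * a x) - c * ∑ i, a i := by
    intro x
    simp only [mul_add, Finset.sum_add_distrib, mul_ite, mul_zero,
      Finset.sum_ite_eq', Finset.mem_univ, if_true, ← Finset.sum_mul]
    rw [Finset.sum_neg_distrib]
    ring
  have e2 : ∀ x : Fin n, ∑ y : Fin n, (-b y.castSucc) * ((if y = x then (u y.castSucc)⁻¹ else 0) + c)
      = -((u x.castSucc)⁻¹ * b x.castSucc) - c * ∑ y : Fin n, b y.castSucc := by
    intro x
    simp only [mul_add, Finset.sum_add_distrib, mul_ite, mul_zero,
      Finset.sum_ite_eq', Finset.mem_univ, if_true, ← Finset.sum_mul]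
    rw [Finset.sum_neg_distrib]
    ring
  have e3 : ∑ y : Fin n, (-b y.castSucc) * -c = c * ∑ y : Fin n, b y.castSucc := by
    simp only [mul_neg, neg_mul, neg_neg, ← Finset.sum_mul]
    ring
  have e4 : ∑ x1, (-a x1) * -c = c * ∑ i, a i := by
    simp only [mul_neg, neg_mul, neg_neg, ← Finset.sum_mul]
    ring
  simp only [e1, e2, e3, e4]
  have hb : ∑ y : Fin n, b y.castSucc = ∑ j, b j - b (Fin.last n) := by
    rw [Fin.sum_univ_castSucc (f := b)]; ring
  have hb' : ∑ y : Fin n, b' y.castSucc = ∑ j, b' j - b' (Fin.last n) := by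
    rw [Fin.sum_univ_castSucc (f := b')]; ring
  rw [hb]
  conv_rhs => rw [Fin.sum_univ_castSucc (f := fun j => (u j)⁻¹ * b j * b' j)]
  simp only [sub_eq_add_neg, neg_add, neg_neg, sub_mul, add_mul, neg_mul, mul_neg,
    Finset.sum_add_distrib, Finset.sum_neg_distrib, ← Finset.mul_sum, ← Finset.sum_mul]
  rw [hb', ht, ht', ← hc]
  ring

/-- Closed form of `H_{γθ} S H_{γθ}ᵀ`: the cross terms cancel by the
telescoping identity, leaving a sum of rank-one matrices built from the
weighted row and column sums of the covariates (with the convention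
`v_{n+n,n+n} := v_{2n,2n}` for the `j = n` term, which agrees with the column
sum formula). -/
theorem crossHessian_S_crossHessian_transpose
    (w : Fin (n+1) → Fin (n+1) → ℝ) (Z : Fin (n+1) → Fin (n+1) → Fin p → ℝ) :
    crossHessian n p w Z * SapproxW n w * (crossHessian n p w Z).transpose =
      Matrix.of fun k l =>
        (∑ i, (rowSum n w i)⁻¹ *
          (∑ j ∈ univ.erase i, w i j * Z i j k) *
          (∑ j ∈ univ.erase i, w i j * Z i j l)) +
        ∑ j, (colSum n w j)⁻¹ *
          (∑ i ∈ univ.erase j, w i j * Z i j k) *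
          (∑ i ∈ univ.erase j, w i j * Z i j l) := by
  ext k l
  simp only [Matrix.mul_apply, crossHessian, SapproxW, Matrix.transpose_apply,
    Matrix.of_apply, Fintype.sum_sum_type]
  exact key n
    (fun i => ∑ j ∈ univ.erase i, w i j * Z i j k)
    (fun i => ∑ j ∈ univ.erase i, w i j * Z i j l)
    (fun j => ∑ i ∈ univ.erase j, w i j * Z i j k)
    (fun j => ∑ i ∈ univ.erase j, w i j * Z i j l)
    (rowSum n w) (colSum n w)
    (swap_erase_sum n fun i j => w i j * Z i j k)
    (swap_erase_sum n fun i j => w i j * Z i j l)
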